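/- arXiv:1503.05663 — 7 statements merged into one kernel-verified Lean document; each statement's English description precedes it below -/
import Mathlib

section
/- (Cassini's identity for Fibonacci elements in an arbitrary algebra.) Let A be a (possibly nonassociative, noncommutative) nonunital ring which is an ℝ-algebra, let n ∈ ℕ, and let e_0, e_1, ..., e_n be elements of A. Let (f_m)_{m∈ℤ} be the integer-indexed Fibonacci sequence and for each m ∈ ℤ set F_m = Σ_{k=0}^{n} f_{m+k} • e_k. Then for every m ∈ ℤ, F_{m−1}·F_{m+1} − F_m·F_m = (−1)^m • (F_{−1}·F_1 − F_0·F_0). -/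
/-- Cassini's identity for Fibonacci elements in an arbitrary (nonunital, possibly
nonassociative, noncommutative) `ℝ`-algebra:
`F (m-1) * F (m+1) - F m * F m = (-1) ^ m • (F (-1) * F 1 - F 0 * F 0)`. -/
theorem fibonacci_element_cassini {A : Type*} [NonUnitalNonAssocRing A]
    [Module ℝ A] [SMulCommClass ℝ A A] [IsScalarTower ℝ A A]
    (n : ℕ) (e : ℕ → A)
    (f : ℤ → ℤ) (hf0 : f 0 = 0) (hf1 : f 1 = 1)
    (hf : ∀ m : ℤ, f (m + 2) = f (m + 1) + f m)
    (F : ℤ → A)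
    (hF : ∀ m : ℤ, F m = ∑ k ∈ Finset.range (n + 1), f (m + k) • e k) :
    ∀ m : ℤ, F (m - 1) * F (m + 1) - F m * F m =
      ((-1 : ℝ) ^ m) • (F (-1) * F 1 - F 0 * F 0) := by
  have hrec : ∀ m : ℤ, F (m + 1) = F m + F (m - 1) := by
    intro m
    simp only [hF, ← Finset.sum_add_distrib, ← add_smul]
    refine Finset.sum_congr rfl fun k _ => ?_
    have h := hf (m - 1 + k)
    rw [show m - 1 + (k : ℤ) + 2 = m + 1 + k by ring,
        show m - 1 + (k : ℤ) + 1 = m + k by ring] at h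
    rw [h]
  have hstep : ∀ m : ℤ, F m * F (m + 2) - F (m + 1) * F (m + 1) =
      -(F (m - 1) * F (m + 1) - F m * F m) := by
    intro m
    have h1 : F (m + 2) = F (m + 1) + F m := by
      have := hrec (m + 1)
      rwa [show m + 1 + 1 = m + 2 by ring, show m + 1 - 1 = m by ring] at this
    have h2 : F (m + 1) = F m + F (m - 1) := hrec m
    rw [h1, h2]
    noncomm_ring
  intro m
  induction m using Int.induction_on with
  | zero => norm_num
  | succ k ih =>
      have h := hstep k
      rw [show (k : ℤ) + 1 - 1 = k by ring, show (k : ℤ) + 1 + 1 = k + 2 by ring, h, ih,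
        zpow_add_one₀ (by norm_num : (-1 : ℝ) ≠ 0), mul_neg_one, neg_smul]
  | pred k ih =>
      have h := hstep (-(k : ℤ) - 1)
      rw [show -(k : ℤ) - 1 + 2 = -k + 1 by ring, show -(k : ℤ) - 1 + 1 = -k by ring] at h
      rw [show -(k : ℤ) - 1 + 1 = -k by ring]
      have h' : F (-(k : ℤ) - 1 - 1) * F (-(k : ℤ)) - F (-(k : ℤ) - 1) * F (-(k : ℤ) - 1) =
          -(F (-(k : ℤ) - 1) * F (-(k : ℤ) + 1) - F (-(k : ℤ)) * F (-(k : ℤ))) := by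
        rw [h]; abel
      rw [h', ih, ← neg_smul]
      congr 1
      rw [show -(k : ℤ) - 1 = -k - 1 by ring, zpow_sub_one₀ (by norm_num : (-1 : ℝ) ≠ 0)]
      ring
end

section
/- (Analogue of Cassini's identity.) Let A be a (possibly nonassociative, noncommutative) nonunital ring which is an ℝ-algebra, let n ∈ ℕ, and let e_0, e_1, ..., e_n be elements of A. Let (f_m)_{m∈ℤ} be the integer-indexed Fibonacci sequence and for each m ∈ ℤ set F_m = Σ_{k=0}^{n} f_{m+k} • e_k. Then for every m ∈ ℤ, F_{m+1}·F_{m−1} − F_m·F_m = (−1)^m • (F_1·F_{−1} − F_0·F_0). -/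
/-- Analogue of Cassini's identity for Fibonacci elements in an arbitrary (nonunital,
possibly nonassociative, noncommutative) `ℝ`-algebra:
`F (m+1) * F (m-1) - F m * F m = (-1) ^ m • (F 1 * F (-1) - F 0 * F 0)`. -/
theorem fibonacci_element_cassini' {A : Type*} [NonUnitalNonAssocRing A]
    [Module ℝ A] [SMulCommClass ℝ A A] [IsScalarTower ℝ A A]
    (n : ℕ) (e : ℕ → A)
    (f : ℤ → ℤ) (hf0 : f 0 = 0) (hf1 : f 1 = 1)
    (hf : ∀ m : ℤ, f (m + 2) = f (m + 1) + f m)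
    (F : ℤ → A)
    (hF : ∀ m : ℤ, F m = ∑ k ∈ Finset.range (n + 1), f (m + k) • e k) :
    ∀ m : ℤ, F (m + 1) * F (m - 1) - F m * F m =
      ((-1 : ℝ) ^ m) • (F 1 * F (-1) - F 0 * F 0) := by
  have hrec : ∀ m : ℤ, F (m + 2) = F (m + 1) + F m := by
    intro m
    rw [hF, hF, hF, ← Finset.sum_add_distrib]
    refine Finset.sum_congr rfl fun k _ => ?_
    rw [show m + 2 + (k : ℤ) = (m + k) + 2 by ring, hf (m + k),
      show m + 1 + (k : ℤ) = (m + k) + 1 by ring, add_smul]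
  have hrec' : ∀ m : ℤ, F (m + 1) = F m + F (m - 1) := by
    intro m
    have := hrec (m - 1)
    rwa [show m - 1 + 2 = m + 1 by ring, show m - 1 + 1 = m by ring] at this
  have key : ∀ m : ℤ, F (m + 1 + 1) * F (m + 1 - 1) - F (m + 1) * F (m + 1) =
      -(F (m + 1) * F (m - 1) - F m * F m) := by
    intro m
    have h1 : F (m + 1 + 1) = F (m + 1) + F m := by
      have := hrec m; rwa [show m + 2 = m + 1 + 1 by ring] at this
    have h2 := hrec' m
    rw [show m + 1 - 1 = m by ring, h1]
    nth_rewrite 3 [h2]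
    simp only [add_mul, mul_add]
    abel
  intro m
  induction m using Int.induction_on with
  | zero => norm_num
  | succ k ih =>
    rw [key k, ih, zpow_add_one₀ (by norm_num : (-1 : ℝ) ≠ 0)]
    simp [mul_smul]
  | pred k ih =>
    have hk := key (-(k : ℤ) - 1)
    rw [show -(k : ℤ) - 1 + 1 = -k by ring] at hk
    have h3 : F (-(k:ℤ) - 1 + 1) * F (-(k:ℤ) - 1 - 1) - F (-(k:ℤ) - 1) * F (-(k:ℤ) - 1)
        = -(F (-(k:ℤ) + 1) * F (-(k:ℤ) - 1) - F (-(k:ℤ)) * F (-(k:ℤ))) := by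
      rw [show -(k:ℤ) - 1 + 1 = -k by ring]
      linear_combination (norm := module) hk
    rw [h3, ih, zpow_sub_one₀ (by norm_num : (-1 : ℝ) ≠ 0)]
    norm_num [smul_smul]
end

section
/- (Intermediate identity in the proof of Cassini's identity.) Let A be a (possibly nonassociative, noncommutative) nonunital ring which is an ℝ-algebra, let n ∈ ℕ, and let e_0, e_1, ..., e_n be elements of A. Let (f_m)_{m∈ℤ} be the integer-indexed Fibonacci sequence and set F_m = Σ_{k=0}^{n} f_{m+k} • e_k for m ∈ ℤ. Then for every m ∈ ℤ, F_{m−1}·F_{m+1} − F_m·F_m = (−1)^m • Σ_{j=0}^{n} (−1)^j (e_j · F_{1−j}). -/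
/-- Catalan-type identity for the integer-indexed Fibonacci sequence, cast to `ℝ`:
`f (m + 1) * f n - f m * f (n + 1) = (-1) ^ m * f (n - m)`. -/
theorem key_fib_real (f : ℤ → ℤ) (hf0 : f 0 = 0) (hf1 : f 1 = 1)
    (hf : ∀ m : ℤ, f (m + 2) = f (m + 1) + f m) :
    ∀ m n : ℤ, ((f (m + 1) : ℝ) * f n - f m * f (n + 1)) = (-1 : ℝ) ^ m * f (n - m) := by
  have hrec : ∀ m : ℤ, f (m + 1) = f m + f (m - 1) := by
    intro m
    have h := hf (m - 1)
    rw [show m - 1 + 2 = m + 1 by ring, show m - 1 + 1 = m by ring] at h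
    exact h
  have hne : (-1 : ℝ) ≠ 0 := by norm_num
  intro m
  induction m using Int.induction_on with
  | zero => intro n; simp [hf0, hf1]
  | succ m ih =>
    intro n
    have h1 := hrec ((m : ℤ) + 1)
    rw [show (m : ℤ) + 1 - 1 = m by ring] at h1
    have h2 := hrec n
    have h3 := ih (n - 1)
    rw [show n - 1 + 1 = n by ring] at h3
    rw [show (m : ℤ) + 1 + 1 = ((m : ℤ) + 1) + 1 by ring, h1, h2,
      show n - ((m : ℤ) + 1) = n - 1 - m by ring]
    push_cast
    rw [zpow_add_one₀ hne]
    nlinarith [h3]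
  | pred m ih =>
    intro n
    have h1 := hrec (-(m : ℤ))
    have h4 : f (-(m : ℤ) - 1) = f (-(m : ℤ) + 1) - f (-(m : ℤ)) := by
      rw [show -(m : ℤ) + 1 = -m + 1 from rfl] at h1
      omega
    have h2 := hf n
    have h3 := ih (n + 1)
    rw [show n + 1 + 1 = n + 2 by ring, show n + 1 - -(m : ℤ) = n + 1 + m by ring] at h3
    rw [show -(m : ℤ) - 1 + 1 = -m by ring, h4,
      show n - (-(m : ℤ) - 1) = n + 1 + m by ring,
      show -(m : ℤ) - 1 = -m + -1 by ring, zpow_add₀ hne]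
    have h2' : ((f (n + 2) : ℝ)) = f (n + 1) + f n := by exact_mod_cast h2
    push_cast at h3 ⊢
    rw [zpow_neg_one]
    linear_combination (-1:ℝ) * h3 - (f (-(m:ℤ)) : ℝ) * h2'

/-- Intermediate identity in the proof of Cassini's identity:
`F (m-1) * F (m+1) - F m * F m = (-1) ^ m • ∑ j, (-1) ^ j • (e j * F (1 - j))`. -/
theorem fibonacci_element_cassini_intermediate {A : Type*} [NonUnitalNonAssocRing A]
    [Module ℝ A] [SMulCommClass ℝ A A] [IsScalarTower ℝ A A]
    (n : ℕ) (e : ℕ → A)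
    (f : ℤ → ℤ) (hf0 : f 0 = 0) (hf1 : f 1 = 1)
    (hf : ∀ m : ℤ, f (m + 2) = f (m + 1) + f m)
    (F : ℤ → A)
    (hF : ∀ m : ℤ, F m = ∑ k ∈ Finset.range (n + 1), f (m + k) • e k) :
    ∀ m : ℤ, F (m - 1) * F (m + 1) - F m * F m =
      ((-1 : ℝ) ^ m) •
        ∑ j ∈ Finset.range (n + 1), (-1 : ℤ) ^ j • (e j * F (1 - (j : ℤ))) := by
  have key := key_fib_real f hf0 hf1 hf
  have hne : (-1 : ℝ) ≠ 0 := by norm_num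
  intro m
  simp only [hF, Finset.sum_mul_sum, ← Int.cast_smul_eq_zsmul ℝ,
    smul_mul_smul_comm, Finset.sum_mul, smul_mul_assoc,
    Finset.mul_sum, mul_smul_comm, Finset.smul_sum, smul_smul, ← Finset.sum_sub_distrib,
    ← sub_smul]
  rw [Finset.sum_comm]
  refine Finset.sum_congr rfl fun j hj => Finset.sum_congr rfl fun k hk => ?_
  congr 1
  have hzp : (-1 : ℝ) ^ (m + (j : ℤ) - 1) = -((-1 : ℝ) ^ m * (-1 : ℝ) ^ j) := by
    rw [show m + (j : ℤ) - 1 = m + (j : ℤ) + (-1) by ring, zpow_add₀ hne, zpow_add₀ hne,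
      zpow_natCast, zpow_neg_one]
    norm_num
  have h := key (m + j - 1) (m + k)
  rw [show m + (j : ℤ) - 1 + 1 = m + j by ring,
    show m + (k : ℤ) - (m + j - 1) = 1 - j + k by ring, hzp] at h
  rw [show m - 1 + (j : ℤ) = m + j - 1 by ring, show m + 1 + (k : ℤ) = m + k + 1 by ring]
  push_cast
  linear_combination (-1 : ℝ) * h
end

section
/- Let (f_m) be the Fibonacci sequence. For n ∈ ℕ, define the imaginary Fibonacci quaternion F_n as the vector (f_n, f_{n+1}, f_{n+2}) ∈ ℝ³ (the pure quaternion f_n i + f_{n+1} j + f_{n+2} k). Then for all k, m, n ∈ ℕ, the mixed product vanishes: ⟨F_k × F_m, F_n⟩ = 0, where × is the cross product on ℝ³ and ⟨·,·⟩ is the standard inner product. -/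
/-- The imaginary Fibonacci quaternion `F n = f n • i + f (n+1) • j + f (n+2) • k`,
identified with the vector `(f n, f (n+1), f (n+2)) ∈ ℝ³`. -/
def imaginaryFibonacciQuaternion (n : ℕ) : Fin 3 → ℝ :=
  ![(Nat.fib n : ℝ), (Nat.fib (n + 1) : ℝ), (Nat.fib (n + 2) : ℝ)]

/-- The mixed product of any three imaginary Fibonacci quaternions vanishes. -/
theorem imaginaryFibonacciQuaternion_mixed_product (k m n : ℕ) :
    dotProduct
      (crossProduct (imaginaryFibonacciQuaternion k) (imaginaryFibonacciQuaternion m))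
      (imaginaryFibonacciQuaternion n) = 0 := by
  simp only [imaginaryFibonacciQuaternion, crossProduct, dotProduct,
    Fin.sum_univ_three, Nat.fib_add_two, Nat.cast_add]
  simp [Matrix.cons_val_zero, Matrix.cons_val_one]
  ring
end

section
/- Let (f_m) be the Fibonacci sequence. For n ∈ ℕ, define the imaginary Fibonacci quaternion F_n as the vector (f_n, f_{n+1}, f_{n+2}) ∈ ℝ³. Then any three imaginary Fibonacci quaternions F_k, F_m, F_n are linearly dependent over ℝ, i.e. the family (F_k, F_m, F_n) is not linearly independent. -/
/-- The linear functional `v ↦ v 0 + v 1 - v 2`. -/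
noncomputable def fibPhi : (Fin 3 → ℝ) →ₗ[ℝ] ℝ :=
  (LinearMap.proj 0 : (Fin 3 → ℝ) →ₗ[ℝ] ℝ) + LinearMap.proj 1 - LinearMap.proj 2

lemma imaginaryFibonacciQuaternion_mem_ker (j : ℕ) :
    imaginaryFibonacciQuaternion j ∈ LinearMap.ker fibPhi := by
  simp only [LinearMap.mem_ker, fibPhi, LinearMap.sub_apply, LinearMap.add_apply,
    LinearMap.proj_apply, imaginaryFibonacciQuaternion]
  simp [Nat.fib_add_two]

/-- Any three imaginary Fibonacci quaternions are linearly dependent over `ℝ`. -/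
theorem imaginaryFibonacciQuaternion_not_linearIndependent (k m n : ℕ) :
    ¬ LinearIndependent ℝ
        ![imaginaryFibonacciQuaternion k, imaginaryFibonacciQuaternion m,
          imaginaryFibonacciQuaternion n] := by
  intro h
  set K := LinearMap.ker fibPhi with hK
  have hker : ∀ i : Fin 3,
      (![imaginaryFibonacciQuaternion k, imaginaryFibonacciQuaternion m,
        imaginaryFibonacciQuaternion n]) i ∈ K := by
    intro i
    fin_cases i <;> exact imaginaryFibonacciQuaternion_mem_ker _
  let g : Fin 3 → K := fun i => ⟨_, hker i⟩
  have hg : LinearIndependent ℝ g := by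
    apply LinearIndependent.of_comp K.subtype
    convert h
    funext i; rfl
  have h3 : 3 ≤ Module.finrank ℝ K := by
    simpa using hg.fintype_card_le_finrank
  have hne : K ≠ ⊤ := by
    intro htop
    have : (![0, 0, 1] : Fin 3 → ℝ) ∈ K := htop ▸ Submodule.mem_top
    simp [hK, fibPhi, LinearMap.mem_ker] at this
  have hlt : Module.finrank ℝ K < Module.finrank ℝ (Fin 3 → ℝ) :=
    Submodule.finrank_lt hne
  rw [Module.finrank_fin_fun] at hlt
  omega
end

section
/- (Intermediate computation for imaginary Fibonacci octonions.) Let (f_m)_{m∈ℤ} be the integer-indexed Fibonacci sequence. For n ∈ ℕ define the imaginary Fibonacci octonion F_n as the vector (f_n, f_{n+1}, f_{n+2}, f_{n+3}, f_{n+4}, f_{n+5}, f_{n+6}) ∈ ℝ⁷, and let × denote the 7-dimensional cross product given coordinatewise by (x × y)_1 = x_2y_4 − x_4y_2 + x_3y_7 − x_7y_3 + x_5y_6 − x_6y_5, (x × y)_2 = x_3y_5 − x_5y_3 + x_4y_1 − x_1y_4 + x_6y_7 − x_7y_6, (x × y)_3 = x_4y_6 − x_6y_4 + x_5y_2 − x_2y_5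 + x_7y_1 − x_1y_7, (x × y)_4 = x_5y_7 − x_7y_5 + x_6y_3 − x_3y_6 + x_1y_2 − x_2y_1, (x × y)_5 = x_6y_1 − x_1y_6 + x_7y_4 − x_4y_7 + x_2y_3 − x_3y_2, (x × y)_6 = x_7y_2 − x_2y_7 + x_1y_5 − x_5y_1 + x_3y_4 − x_4y_3, (x × y)_7 = x_1y_3 − x_3y_1 + x_2y_6 − x_6y_2 + x_4y_5 − x_5y_4. Then for all k, m ∈ ℕ, F_k × F_m = (−1)^k f_{m−k} · (−3, 2, 7, 0, 4, −9, 3). -/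
/-- The 7-dimensional cross product on `ℝ⁷` induced by octonion multiplication
(coordinates `x 0, ..., x 6` correspond to `x₁, ..., x₇`). -/
def crossProduct7 (x y : Fin 7 → ℝ) : Fin 7 → ℝ :=
  ![x 1 * y 3 - x 3 * y 1 + x 2 * y 6 - x 6 * y 2 + x 4 * y 5 - x 5 * y 4,
    x 2 * y 4 - x 4 * y 2 + x 3 * y 0 - x 0 * y 3 + x 5 * y 6 - x 6 * y 5,
    x 3 * y 5 - x 5 * y 3 + x 4 * y 1 - x 1 * y 4 + x 6 * y 0 - x 0 * y 6,
    x 4 * y 6 - x 6 * y 4 + x 5 * y 2 - x 2 * y 5 + x 0 * y 1 - x 1 * y 0,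
    x 5 * y 0 - x 0 * y 5 + x 6 * y 3 - x 3 * y 6 + x 1 * y 2 - x 2 * y 1,
    x 6 * y 1 - x 1 * y 6 + x 0 * y 4 - x 4 * y 0 + x 2 * y 3 - x 3 * y 2,
    x 0 * y 2 - x 2 * y 0 + x 1 * y 5 - x 5 * y 1 + x 3 * y 4 - x 4 * y 3]

/-- d'Ocagne-type identity for an integer-indexed Fibonacci sequence. -/
lemma fib_dOcagne (f : ℤ → ℤ)
    (hf0 : f 0 = 0) (hf1 : f 1 = 1)
    (hf : ∀ m : ℤ, f (m + 2) = f (m + 1) + f m) :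
    ∀ k : ℕ, ∀ m : ℤ,
      f m * f (k + 1) - f (m + 1) * f k = (-1 : ℤ) ^ k * f (m - k) := by
  have h2 : f (2:ℤ) = 1 := by have := hf 0; norm_num [hf0, hf1] at this; omega
  have key : ∀ k : ℕ, (∀ m : ℤ,
      f m * f (k + 1) - f (m + 1) * f k = (-1 : ℤ) ^ k * f (m - k)) ∧
      (∀ m : ℤ, f m * f (k + 1 + 1) - f (m + 1) * f (k + 1)
        = (-1 : ℤ) ^ (k + 1) * f (m - k - 1)) := by
    intro k
    induction k with
    | zero =>
      constructor
      · intro m; norm_num [hf0, hf1]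
      · intro m
        have hm : f (m + 1) = f m + f (m - 1) := by
          have h := hf (m - 1)
          rw [show m - 1 + 2 = m + 1 by ring, show m - 1 + 1 = m by ring] at h
          exact h
        norm_num [h2, hf1, hm]
    | succ n ih =>
      refine ⟨fun m => by
        have := ih.2 m; push_cast at this ⊢; convert this using 3 <;> ring, ?_⟩
      intro m
      have hr : f ((n:ℤ) + 1 + 1 + 1) = f ((n:ℤ) + 1 + 1) + f ((n:ℤ) + 1) := by
        have h := hf ((n:ℤ) + 1)
        rw [show (n:ℤ) + 1 + 2 = (n:ℤ) + 1 + 1 + 1 by ring] at h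
        exact h
      have hl : f (m - (n:ℤ) - 2) = f (m - (n:ℤ)) - f (m - (n:ℤ) - 1) := by
        have h := hf (m - (n:ℤ) - 2)
        rw [show m - (n:ℤ) - 2 + 2 = m - (n:ℤ) by ring,
            show m - (n:ℤ) - 2 + 1 = m - (n:ℤ) - 1 by ring] at h
        omega
      have i1 := ih.1 m
      have i2 := ih.2 m
      have hr2 : f ((n:ℤ) + 1 + 1) = f ((n:ℤ) + 1) + f (n:ℤ) := by
        have h := hf (n:ℤ)
        rw [show (n:ℤ) + 2 = (n:ℤ) + 1 + 1 by ring] at h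
        exact h
      push_cast
      rw [hr, hr2, show m - ((n:ℤ)+1) - 1 = m - (n:ℤ) - 2 by ring, hl]
      rw [hr2] at i2
      ring_nf
      ring_nf at i1 i2
      linarith [i1, i2]
  exact fun k => (key k).1

/-- Intermediate computation for imaginary Fibonacci octonions:
`F k × F m = (-1) ^ k * f (m - k) • (-3, 2, 7, 0, 4, -9, 3)`, where `F n` is the
imaginary Fibonacci octonion `(f n, f (n+1), ..., f (n+6)) ∈ ℝ⁷`. -/
theorem imaginaryFibonacciOctonion_cross (f : ℤ → ℤ)
    (hf0 : f 0 = 0) (hf1 : f 1 = 1)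
    (hf : ∀ m : ℤ, f (m + 2) = f (m + 1) + f m)
    (F : ℕ → Fin 7 → ℝ)
    (hF : ∀ n : ℕ, F n = fun i : Fin 7 => (f (n + (i : ℕ)) : ℝ)) :
    ∀ k m : ℕ, crossProduct7 (F k) (F m) =
      ((-1 : ℝ) ^ k * (f ((m : ℤ) - (k : ℤ)) : ℝ)) •
        ![-3, 2, 7, 0, 4, -9, 3] := by
  intro k m
  have e2 : ∀ t : ℤ, f (t + 2) = f (t + 1) + f t := hf
  have e3 : ∀ t : ℤ, f (t + 3) = 2 * f (t + 1) + f t := by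
    intro t
    have h := hf (t + 1)
    rw [show t+1+2 = t+3 by ring, show t+1+1 = t+2 by ring] at h
    rw [h, hf t]; ring
  have e4 : ∀ t : ℤ, f (t + 4) = 3 * f (t + 1) + 2 * f t := by
    intro t
    have h := hf (t + 2)
    rw [show t+2+2 = t+4 by ring, show t+2+1 = t+3 by ring] at h
    rw [h, e3, hf t]; ring
  have e5 : ∀ t : ℤ, f (t + 5) = 5 * f (t + 1) + 3 * f t := by
    intro t
    have h := hf (t + 3)
    rw [show t+3+2 = t+5 by ring, show t+3+1 = t+4 by ring] at h
    rw [h, e4, e3]; ring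
  have e6 : ∀ t : ℤ, f (t + 6) = 8 * f (t + 1) + 5 * f t := by
    intro t
    have h := hf (t + 4)
    rw [show t+4+2 = t+6 by ring, show t+4+1 = t+5 by ring] at h
    rw [h, e5, e4]; ring
  have KR : ((f (m:ℤ) : ℝ)) * (f ((k:ℤ) + 1) : ℝ) - (f ((m:ℤ) + 1) : ℝ) * (f (k:ℤ) : ℝ)
      = (-1 : ℝ) ^ k * (f ((m:ℤ) - (k:ℤ)) : ℝ) := by
    exact_mod_cast congrArg (Int.cast : ℤ → ℝ) (fib_dOcagne f hf0 hf1 hf k m)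
  have c0 : (((0 : Fin 7) : ℕ) : ℤ) = 0 := rfl
  have c1 : (((1 : Fin 7) : ℕ) : ℤ) = 1 := rfl
  have c2 : (((2 : Fin 7) : ℕ) : ℤ) = 2 := rfl
  have c3 : (((3 : Fin 7) : ℕ) : ℤ) = 3 := rfl
  have c4 : (((4 : Fin 7) : ℕ) : ℤ) = 4 := rfl
  have c5 : (((5 : Fin 7) : ℕ) : ℤ) = 5 := rfl
  have c6 : (((6 : Fin 7) : ℕ) : ℤ) = 6 := rfl
  simp only [crossProduct7, hF, c0, c1, c2, c3, c4, c5, c6, add_zero, e2, e3, e4, e5, e6,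
    Matrix.smul_cons, smul_eq_mul, Matrix.smul_empty]
  simp only [Matrix.vecCons]
  rw [Fin.cons_inj, Fin.cons_inj, Fin.cons_inj, Fin.cons_inj,
    Fin.cons_inj, Fin.cons_inj, Fin.cons_inj]
  push_cast
  refine ⟨?_, ?_, ?_, ?_, ?_, ?_, ?_, funext fun i => i.elim0⟩
  · linear_combination (-3 : ℝ) * KR
  · linear_combination (2 : ℝ) * KR
  · linear_combination (7 : ℝ) * KR
  · linear_combination (0 : ℝ) * KR
  · linear_combination (4 : ℝ) * KR
  · linear_combination (-9 : ℝ) * KR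
  · linear_combination (3 : ℝ) * KR
end

section
/- Let (f_m) be the Fibonacci sequence. For n ∈ ℕ define the imaginary Fibonacci octonion F_n as the vector (f_n, f_{n+1}, f_{n+2}, f_{n+3}, f_{n+4}, f_{n+5}, f_{n+6}) ∈ ℝ⁷, and let × denote the 7-dimensional cross product on ℝ⁷ given coordinatewise by (x × y)_1 = x_2y_4 − x_4y_2 + x_3y_7 − x_7y_3 + x_5y_6 − x_6y_5, (x × y)_2 = x_3y_5 − x_5y_3 + x_4y_1 − x_1y_4 + x_6y_7 − x_7y_6, (x × y)_3 = x_4y_6 − x_6y_4 + x_5y_2 − x_2y_5 + x_7y_1 − x_1y_7, (x × y)_4 = x_5y_7 − x_7y_5 + x_6y_3 − x_3y_6 + x_1y_2 − x_2y_1, (x × y)_5 = x_6y_1 − x_1y_6 + x_7y_4 − x_4y_7 + x_2y_3 − x_3y_2, (x × y)_6 = x_7y_2 − x_2y_7 + x_1y_5 − x_5y_1 + x_3y_4 − x_4y_3, (x × y)_7 = x_1y_3 − x_3y_1 + x_2y_6 − x_6y_2 + x_4y_5 − x_5y_4. Then for all k, m, n ∈ ℕ, the mixed product vanishes: ⟨F_k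 × F_m, F_n⟩ = 0, where ⟨·,·⟩ is the standard inner product on ℝ⁷. -/
/-- The imaginary Fibonacci octonion `F n = (f n, f (n+1), ..., f (n+6)) ∈ ℝ⁷`. -/
def imaginaryFibonacciOctonion (n : ℕ) : Fin 7 → ℝ :=
  fun i => (Nat.fib (n + (i : ℕ)) : ℝ)

def fibVec (a b : ℝ) : Fin 7 → ℝ :=
  ![a, b, a + b, a + 2*b, 2*a + 3*b, 3*a + 5*b, 5*a + 8*b]

lemma fibVec0 (a b : ℝ) : fibVec a b 0 = a := rfl
lemma fibVec1 (a b : ℝ) : fibVec a b 1 = b := rfl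
lemma fibVec2 (a b : ℝ) : fibVec a b 2 = a + b := rfl
lemma fibVec3 (a b : ℝ) : fibVec a b 3 = a + 2*b := rfl
lemma fibVec4 (a b : ℝ) : fibVec a b 4 = 2*a + 3*b := rfl
lemma fibVec5 (a b : ℝ) : fibVec a b 5 = 3*a + 5*b := rfl
lemma fibVec6 (a b : ℝ) : fibVec a b 6 = 5*a + 8*b := rfl

lemma cp0 (x y : Fin 7 → ℝ) : crossProduct7 x y 0 =
    x 1 * y 3 - x 3 * y 1 + x 2 * y 6 - x 6 * y 2 + x 4 * y 5 - x 5 * y 4 := rfl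
lemma cp1 (x y : Fin 7 → ℝ) : crossProduct7 x y 1 =
    x 2 * y 4 - x 4 * y 2 + x 3 * y 0 - x 0 * y 3 + x 5 * y 6 - x 6 * y 5 := rfl
lemma cp2 (x y : Fin 7 → ℝ) : crossProduct7 x y 2 =
    x 3 * y 5 - x 5 * y 3 + x 4 * y 1 - x 1 * y 4 + x 6 * y 0 - x 0 * y 6 := rfl
lemma cp3 (x y : Fin 7 → ℝ) : crossProduct7 x y 3 =
    x 4 * y 6 - x 6 * y 4 + x 5 * y 2 - x 2 * y 5 + x 0 * y 1 - x 1 * y 0 := rfl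
lemma cp4 (x y : Fin 7 → ℝ) : crossProduct7 x y 4 =
    x 5 * y 0 - x 0 * y 5 + x 6 * y 3 - x 3 * y 6 + x 1 * y 2 - x 2 * y 1 := rfl
lemma cp5 (x y : Fin 7 → ℝ) : crossProduct7 x y 5 =
    x 6 * y 1 - x 1 * y 6 + x 0 * y 4 - x 4 * y 0 + x 2 * y 3 - x 3 * y 2 := rfl
lemma cp6 (x y : Fin 7 → ℝ) : crossProduct7 x y 6 =
    x 0 * y 2 - x 2 * y 0 + x 1 * y 5 - x 5 * y 1 + x 3 * y 4 - x 4 * y 3 := rfl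

set_option maxHeartbeats 1600000 in
lemma fibVec_mixed (a b c d e f : ℝ) :
    dotProduct (crossProduct7 (fibVec a b) (fibVec c d)) (fibVec e f) = 0 := by
  simp only [dotProduct, Fin.sum_univ_seven, cp0, cp1, cp2, cp3, cp4, cp5, cp6,
    fibVec0, fibVec1, fibVec2, fibVec3, fibVec4, fibVec5, fibVec6]
  ring

lemma imaginaryFibonacciOctonion_eq (n : ℕ) :
    imaginaryFibonacciOctonion n = fibVec (Nat.fib n) (Nat.fib (n + 1)) := by
  have h2 : Nat.fib (n + 2) = Nat.fib n + Nat.fib (n + 1) := Nat.fib_add_two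
  have h3 : Nat.fib (n + 3) = Nat.fib (n + 1) + Nat.fib (n + 2) := by
    rw [show n + 3 = (n + 1) + 2 by ring]; exact Nat.fib_add_two
  have h4 : Nat.fib (n + 4) = Nat.fib (n + 2) + Nat.fib (n + 3) := by
    rw [show n + 4 = (n + 2) + 2 by ring]; exact Nat.fib_add_two
  have h5 : Nat.fib (n + 5) = Nat.fib (n + 3) + Nat.fib (n + 4) := by
    rw [show n + 5 = (n + 3) + 2 by ring]; exact Nat.fib_add_two
  have h6 : Nat.fib (n + 6) = Nat.fib (n + 4) + Nat.fib (n + 5) := by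
    rw [show n + 6 = (n + 4) + 2 by ring]; exact Nat.fib_add_two
  funext i
  fin_cases i
  · show (Nat.fib (n + 0) : ℝ) = (Nat.fib n : ℝ); rw [Nat.add_zero]
  · show (Nat.fib (n + 1) : ℝ) = (Nat.fib (n + 1) : ℝ); rfl
  · show (Nat.fib (n + 2) : ℝ) = (Nat.fib n : ℝ) + (Nat.fib (n + 1) : ℝ)
    rw [h2]; push_cast; ring
  · show (Nat.fib (n + 3) : ℝ) = (Nat.fib n : ℝ) + 2 * (Nat.fib (n + 1) : ℝ)
    rw [h3, h2]; push_cast; ring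
  · show (Nat.fib (n + 4) : ℝ) = 2 * (Nat.fib n : ℝ) + 3 * (Nat.fib (n + 1) : ℝ)
    rw [h4, h3, h2]; push_cast; ring
  · show (Nat.fib (n + 5) : ℝ) = 3 * (Nat.fib n : ℝ) + 5 * (Nat.fib (n + 1) : ℝ)
    rw [h5, h4, h3, h2]; push_cast; ring
  · show (Nat.fib (n + 6) : ℝ) = 5 * (Nat.fib n : ℝ) + 8 * (Nat.fib (n + 1) : ℝ)
    rw [h6, h5, h4, h3, h2]; push_cast; ring

/-- The mixed product of any three imaginary Fibonacci octonions vanishes. -/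
theorem imaginaryFibonacciOctonion_mixed_product (k m n : ℕ) :
    dotProduct
      (crossProduct7 (imaginaryFibonacciOctonion k) (imaginaryFibonacciOctonion m))
      (imaginaryFibonacciOctonion n) = 0 := by
  rw [imaginaryFibonacciOctonion_eq, imaginaryFibonacciOctonion_eq,
    imaginaryFibonacciOctonion_eq]
  exact fibVec_mixed _ _ _ _ _ _
end
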